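/- Let A be an associative ℂ[[ν]]-algebra deformation (e.g. a star product algebra) such that every automorphism has the form exp(νD) for a derivation D, and let C be a ν-antilinear involutive map with C² = id that is an anti-automorphism of both ⋆₁ and ⋆₂. If T is an equivalence transformation from ⋆₁ to ⋆₂ (T(f⋆₁g) = Tf ⋆₂ Tg), and C T C = T exp(νD) for some derivation D of ⋆₁ with C D C = D, then S := T exp((ν/2)D) is an equivalence transformation from ⋆₁ to ⋆₂ satisfying C S C = S. -/

import Mathlib

/-!
Formal series model of star product algebras: `A = V[[ν]]` is represented by
`FS V = ℕ → V` (the `ν`-coefficients), for `V` a complex vector space (e.g.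
`V = C^∞(M, ℂ)`).  A `ν`-linear derivation `D = Σ νⁱ Dᵢ` is given by a family
`Di : ℕ → V → V`; `exp(t ν D)` is then well defined coefficientwise.  The map
`C` is complex conjugation combined with `ν ↦ −ν`, modelled via a conjugation
`c0` on `V` and the sign `(−1)^k` on the `k`-th coefficient.
-/

/-- Formal power series in `ν` with coefficients in `V`. -/
abbrev FS (V : Type*) := ℕ → V

variable {V : Type*} [AddCommGroup V] [Module ℂ V]

/-- The operator `D = Σᵢ νⁱ Dᵢ` on formal series. -/
def Dop (Di : ℕ → V → V) (a : FS V) : FS V := fun k =>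
  ∑ i ∈ Finset.range (k + 1), Di i (a (k - i))

/-- The operator `ν D`. -/
def Nop (Di : ℕ → V → V) (a : FS V) : FS V := fun k =>
  if k = 0 then 0 else Dop Di a (k - 1)

/-- `exp(t ν D) = Σⱼ (tʲ/j!) (νD)ʲ`, a well-defined operator on formal series
since `(νD)ʲ` raises the `ν`-degree by at least `j`. -/
noncomputable def Ex (Di : ℕ → V → V) (t : ℂ) (a : FS V) : FS V := fun k =>
  ∑ j ∈ Finset.range (k + 1),
    (t ^ j * ((j.factorial : ℂ))⁻¹) • (Nop Di)^[j] a k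

/-- The conjugation `C` on formal series: conjugation `c0` of the coefficients
combined with `ν ↦ −ν`. -/
def Cop (c0 : V → V) (a : FS V) : FS V := fun k => ((-1 : ℤ) ^ k) • c0 (a k)

/-- shift operator -/
def Shf (a : FS V) : FS V := fun j => if j = 0 then 0 else a (j - 1)

lemma Nop_eq_shf (Di : ℕ → V → V) (a : FS V) : Nop Di a = Shf (Dop Di a) := rfl

set_option linter.unusedSectionVars false
lemma Shf_add (x y : FS V) : Shf (x + y) = Shf x + Shf y := by
  funext k; by_cases h : k = 0 <;> simp [Shf, h]

lemma Shf_smul (z : ℂ) (x : FS V) : Shf (z • x) = z • Shf x := by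
  funext k; by_cases h : k = 0 <;> simp [Shf, h]

lemma Shfpow_vanish (n k : ℕ) (hk : k < n) (a : FS V) : Shf^[n] a k = 0 := by
  induction n generalizing k with
  | zero => omega
  | succ n ih =>
    rw [Function.iterate_succ_apply']
    by_cases h : k = 0
    · simp [Shf, h]
    · simp only [Shf, h, if_false]
      exact ih _ (by omega)

section lin
variable (Di : ℕ → V → V) (hDlin : ∀ i, IsLinearMap ℂ (Di i))
include hDlin
set_option linter.unusedSectionVars false

lemma Dop_add (x y : FS V) : Dop Di (x + y) = Dop Di x + Dop Di y := by
  funext k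
  simp [Dop, (hDlin _).map_add, Finset.sum_add_distrib]

lemma Dop_smul (z : ℂ) (x : FS V) : Dop Di (z • x) = z • Dop Di x := by
  funext k
  simp [Dop, (hDlin _).map_smul, Finset.smul_sum]

lemma Nop_add (x y : FS V) : Nop Di (x + y) = Nop Di x + Nop Di y := by
  rw [Nop_eq_shf, Dop_add Di hDlin, Shf_add]; rfl

lemma Nop_smul (z : ℂ) (x : FS V) : Nop Di (z • x) = z • Nop Di x := by
  rw [Nop_eq_shf, Dop_smul Di hDlin, Shf_smul]; rfl

lemma Npow_add (n : ℕ) (x y : FS V) :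
    (Nop Di)^[n] (x + y) = (Nop Di)^[n] x + (Nop Di)^[n] y := by
  induction n with
  | zero => rfl
  | succ n ih => simp [Function.iterate_succ_apply', ih, Nop_add Di hDlin]

lemma Npow_smul (n : ℕ) (z : ℂ) (x : FS V) :
    (Nop Di)^[n] (z • x) = z • (Nop Di)^[n] x := by
  induction n with
  | zero => rfl
  | succ n ih => simp [Function.iterate_succ_apply', ih, Nop_smul Di hDlin]

lemma Di_zero (i : ℕ) : Di i 0 = 0 := by
  have := (hDlin i).map_smul 0 0
  simpa using this

lemma Dop_shf (a : FS V) : Dop Di (Shf a) = Shf (Dop Di a) := by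
  funext k
  cases k with
  | zero => simp [Dop, Shf, Di_zero Di hDlin]
  | succ s =>
    simp only [Dop, Shf, Nat.succ_ne_zero, if_false, Nat.succ_sub_one]
    rw [Finset.sum_range_succ]
    have h0 : (if s + 1 - (s + 1) = 0 then (0 : V) else a (s + 1 - (s + 1) - 1)) = 0 := by simp
    rw [h0, Di_zero Di hDlin, add_zero]
    apply Finset.sum_congr rfl
    intro i hi
    have hi' : i ≤ s := Nat.lt_succ_iff.mp (Finset.mem_range.mp hi)
    have h1 : s + 1 - i ≠ 0 := by omega
    have h2 : s + 1 - i - 1 = s - i := by omega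
    simp [h1, h2]

lemma Doppow_shf (n : ℕ) (a : FS V) :
    (Dop Di)^[n] (Shf a) = Shf ((Dop Di)^[n] a) := by
  induction n generalizing a with
  | zero => rfl
  | succ n ih =>
    rw [Function.iterate_succ_apply, Dop_shf Di hDlin, ih,
      Function.iterate_succ_apply]

lemma Npow_eq (n : ℕ) (a : FS V) :
    (Nop Di)^[n] a = Shf^[n] ((Dop Di)^[n] a) := by
  induction n generalizing a with
  | zero => rfl
  | succ n ih =>
    rw [Function.iterate_succ_apply, Nop_eq_shf, ih, Doppow_shf Di hDlin]
    simp [Function.iterate_succ_apply]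

lemma Npow_vanish (n k : ℕ) (hk : k < n) (a : FS V) : (Nop Di)^[n] a k = 0 := by
  rw [Npow_eq Di hDlin]; exact Shfpow_vanish n k hk _

lemma Dop_congr (x y : FS V) (k : ℕ) (h : ∀ j ≤ k, x j = y j) :
    ∀ j ≤ k, Dop Di x j = Dop Di y j := by
  intro j hj
  apply Finset.sum_congr rfl
  intro i _
  rw [h _ (by omega)]

lemma Nop_congr (x y : FS V) (k : ℕ) (h : ∀ j ≤ k, x j = y j) :
    ∀ j ≤ k, Nop Di x j = Nop Di y j := by
  intro j hj
  unfold Nop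
  by_cases h0 : j = 0
  · simp [h0]
  · simp only [h0, if_false]
    exact Dop_congr Di hDlin x y k h (j - 1) (by omega)

lemma Npow_congr (n : ℕ) (x y : FS V) (k : ℕ) (h : ∀ j ≤ k, x j = y j) :
    ∀ j ≤ k, (Nop Di)^[n] x j = (Nop Di)^[n] y j := by
  induction n generalizing x y with
  | zero => exact h
  | succ n ih =>
    simp only [Function.iterate_succ_apply]
    exact ih _ _ (Nop_congr Di hDlin x y k h)

end lin
section m1sec
variable {V : Type*} [AddCommGroup V] [Module ℂ V]
variable (Di : ℕ → V → V) (hDlin : ∀ i, IsLinearMap ℂ (Di i))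
variable (m1 : FS V → FS V → FS V)
variable (hm1lin : ∀ b, IsLinearMap ℂ (fun a => m1 a b) ∧ IsLinearMap ℂ (fun a => m1 b a))
variable (hm1shift : ∀ (a b : FS V) (k : ℕ),
      m1 (fun j => if j = 0 then 0 else a (j - 1)) b k
          = (if k = 0 then 0 else m1 a b (k - 1)) ∧
      m1 a (fun j => if j = 0 then 0 else b (j - 1)) k
          = (if k = 0 then 0 else m1 a b (k - 1)))
variable (hDder : ∀ a b, Dop Di (m1 a b) = m1 (Dop Di a) b + m1 a (Dop Di b))
set_option linter.unusedSectionVars false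

section shiftpart
include hm1shift

lemma m1_shf_left (x b : FS V) (k : ℕ) :
    m1 (Shf x) b k = if k = 0 then 0 else m1 x b (k - 1) := (hm1shift x b k).1

lemma m1_shf_right (x b : FS V) (k : ℕ) :
    m1 b (Shf x) k = if k = 0 then 0 else m1 b x (k - 1) := (hm1shift b x k).2

lemma m1_shfpow_right (l : ℕ) (x b : FS V) : ∀ k, k < l → m1 b (Shf^[l] x) k = 0 := by
  induction l generalizing x with
  | zero => omega
  | succ l ih =>
    intro k hk
    rw [Function.iterate_succ_apply', m1_shf_right m1 hm1shift]
    by_cases h : k = 0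
    · simp [h]
    · simp only [h, if_false]
      exact ih _ _ (by omega)

lemma m1_shfpow (i l : ℕ) (x y : FS V) : ∀ k, k < i + l → m1 (Shf^[i] x) (Shf^[l] y) k = 0 := by
  induction i generalizing x with
  | zero =>
    intro k hk
    exact m1_shfpow_right m1 hm1shift l y (Shf^[0] x) k (by omega)
  | succ i ih =>
    intro k hk
    rw [Function.iterate_succ_apply', m1_shf_left m1 hm1shift]
    by_cases h : k = 0
    · simp [h]
    · simp only [h, if_false]
      exact ih _ _ (by omega)

include hDlin in
lemma m1_Npow_vanish (i l : ℕ) (a b : FS V) (k : ℕ) (hk : k < i + l) :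
    m1 ((Nop Di)^[i] a) ((Nop Di)^[l] b) k = 0 := by
  rw [Npow_eq Di hDlin, Npow_eq Di hDlin]
  exact m1_shfpow m1 hm1shift i l _ _ k hk

end shiftpart

include hm1shift hDder in
lemma Nop_der (a b : FS V) :
    Nop Di (m1 a b) = m1 (Nop Di a) b + m1 a (Nop Di b) := by
  funext k
  have e1 : Nop Di a = (fun j => if j = 0 then 0 else Dop Di a (j - 1)) := rfl
  have e2 : Nop Di b = (fun j => if j = 0 then 0 else Dop Di b (j - 1)) := rfl
  have h1 := (hm1shift (Dop Di a) b k).1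
  have h2 := (hm1shift a (Dop Di b) k).2
  show (if k = 0 then 0 else Dop Di (m1 a b) (k - 1)) = _
  rw [Pi.add_apply, e1, e2, h1, h2, hDder]
  by_cases h : k = 0 <;> simp [h]

include hDlin hm1lin hm1shift hDder in
lemma Npow_m1 (a b : FS V) (n : ℕ) :
    (Nop Di)^[n] (m1 a b)
      = ∑ i ∈ Finset.range (n + 1),
          n.choose i • m1 ((Nop Di)^[i] a) ((Nop Di)^[n - i] b) := by
  have hNsum : ∀ (s : Finset ℕ) (f : ℕ → FS V),
      Nop Di (∑ i ∈ s, f i) = ∑ i ∈ s, Nop Di (f i) :=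
    fun s f => map_sum (AddMonoidHom.mk' (Nop Di) (Nop_add Di hDlin)) f s
  have hNnsmul : ∀ (c : ℕ) (x : FS V), Nop Di (c • x) = c • Nop Di x :=
    fun c x => (AddMonoidHom.mk' (Nop Di) (Nop_add Di hDlin)).map_nsmul c x
  induction n with
  | zero => simp
  | succ n ih =>
    rw [Function.iterate_succ_apply', ih, hNsum]
    have step : ∀ i ∈ Finset.range (n + 1),
        Nop Di (n.choose i • m1 ((Nop Di)^[i] a) ((Nop Di)^[n - i] b))
          = n.choose i • m1 ((Nop Di)^[i + 1] a) ((Nop Di)^[n + 1 - (i + 1)] b)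
            + n.choose i • m1 ((Nop Di)^[i] a) ((Nop Di)^[n + 1 - i] b) := by
      intro i hi
      have hi' : i ≤ n := Nat.lt_succ_iff.mp (Finset.mem_range.mp hi)
      have e1 : n + 1 - (i + 1) = n - i := by omega
      have e2 : n + 1 - i = (n - i) + 1 := by omega
      rw [e1, e2, hNnsmul, Nop_der Di m1 hm1shift hDder, smul_add,
        Function.iterate_succ_apply' (Nop Di) i a,
        Function.iterate_succ_apply' (Nop Di) (n - i) b]
    rw [Finset.sum_congr rfl step]
    rw [Finset.sum_add_distrib]
    -- now Pascal
    set F : ℕ → FS V := fun i => m1 ((Nop Di)^[i] a) ((Nop Di)^[n + 1 - i] b) with hF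
    have lhs1 : ∑ i ∈ Finset.range (n + 1),
        n.choose i • m1 ((Nop Di)^[i + 1] a) ((Nop Di)^[n + 1 - (i + 1)] b)
        = ∑ i ∈ Finset.range (n + 1), n.choose i • F (i + 1) := rfl
    have lhs2 : ∑ i ∈ Finset.range (n + 1),
        n.choose i • m1 ((Nop Di)^[i] a) ((Nop Di)^[n + 1 - i] b)
        = ∑ i ∈ Finset.range (n + 1), n.choose i • F i := rfl
    have rhs : ∑ i ∈ Finset.range (n + 1 + 1),
        (n + 1).choose i • m1 ((Nop Di)^[i] a) ((Nop Di)^[n + 1 - i] b)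
        = ∑ i ∈ Finset.range (n + 1 + 1), (n + 1).choose i • F i := rfl
    rw [lhs1, lhs2, rhs]
    have key : ∑ i ∈ Finset.range (n + 1), n.choose (i + 1) • F (i + 1) + F 0
        = ∑ i ∈ Finset.range (n + 1), n.choose i • F i := by
      rw [Finset.sum_range_succ, Nat.choose_succ_self, zero_smul, add_zero]
      rw [Finset.sum_range_succ' (fun i => n.choose i • F i) n]
      simp
    conv_rhs => rw [Finset.sum_range_succ']
    simp only [Nat.choose_succ_succ, add_smul, Nat.choose_zero_right, one_smul]
    rw [Finset.sum_add_distrib, add_assoc, key]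
end m1sec
section combin

private lemma fact_ne (n : ℕ) : ((n.factorial : ℂ)) ≠ 0 := by
  exact_mod_cast Nat.factorial_ne_zero n

variable {V : Type*} [AddCommGroup V] [Module ℂ V]

lemma sum_reindex (k : ℕ) (t : ℂ) (M : ℕ → ℕ → V)
    (hM : ∀ i l, k < i + l → M i l = 0) :
    ∑ j ∈ Finset.range (k+1), ∑ i ∈ Finset.range (j+1),
        ((t ^ j * ((j.factorial : ℂ))⁻¹) * (j.choose i : ℂ)) • M i (j - i)
      = ∑ i ∈ Finset.range (k+1), ∑ l ∈ Finset.range (k+1),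
          ((t ^ i * ((i.factorial : ℂ))⁻¹) * (t ^ l * ((l.factorial : ℂ))⁻¹)) • M i l := by
  have ext1 : ∀ j ∈ Finset.range (k+1),
      ∑ i ∈ Finset.range (j+1), ((t ^ j * ((j.factorial : ℂ))⁻¹) * (j.choose i : ℂ)) • M i (j - i)
        = ∑ i ∈ Finset.range (k+1), ((t ^ j * ((j.factorial : ℂ))⁻¹) * (j.choose i : ℂ)) • M i (j - i) := by
    intro j hj
    apply Finset.sum_subset
    · apply Finset.range_subset_range.mpr
      exact Nat.succ_le_succ (Nat.lt_succ_iff.mp (Finset.mem_range.mp hj))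
    · intro i _ hni
      have : j < i := by
        simp only [Finset.mem_range] at hni; omega
      rw [Nat.choose_eq_zero_of_lt this]
      simp
  rw [Finset.sum_congr rfl ext1]
  rw [← Finset.sum_product', ← Finset.sum_product']
  rw [← Finset.sum_filter_of_ne (s := Finset.range (k+1) ×ˢ Finset.range (k+1))
      (p := fun p => p.2 ≤ p.1)
      (f := fun p => ((t ^ p.1 * ((p.1.factorial : ℂ))⁻¹) * (p.1.choose p.2 : ℂ)) • M p.2 (p.1 - p.2))
      (by
        intro p _ hne
        by_contra hp
        apply hne
        rw [Nat.choose_eq_zero_of_lt (by omega)]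
        simp)]
  rw [← Finset.sum_filter_of_ne (s := Finset.range (k+1) ×ˢ Finset.range (k+1))
      (p := fun p => p.1 + p.2 ≤ k)
      (f := fun p => ((t ^ p.1 * ((p.1.factorial : ℂ))⁻¹) * (t ^ p.2 * ((p.2.factorial : ℂ))⁻¹)) • M p.1 p.2)
      (by
        intro p _ hne
        by_contra hp
        apply hne
        rw [hM p.1 p.2 (by omega)]
        simp)]
  apply Finset.sum_nbij' (i := fun p => (p.2, p.1 - p.2)) (j := fun q => (q.1 + q.2, q.1))
  · intro p hp
    simp only [Finset.mem_filter, Finset.mem_product, Finset.mem_range] at hp ⊢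
    omega
  · intro q hq
    simp only [Finset.mem_filter, Finset.mem_product, Finset.mem_range] at hq ⊢
    omega
  · intro p hp
    simp only [Finset.mem_filter, Finset.mem_product, Finset.mem_range] at hp
    refine Prod.ext ?_ ?_ <;> simp <;> omega
  · intro q hq
    simp only [Finset.mem_filter, Finset.mem_product, Finset.mem_range] at hq
    refine Prod.ext ?_ ?_ <;> simp <;> omega
  · intro p hp
    simp only [Finset.mem_filter, Finset.mem_product, Finset.mem_range] at hp
    obtain ⟨⟨hp1, hp2⟩, hp3⟩ := hp
    congr 1
    have hch : ((p.1.choose p.2 : ℕ) : ℂ) * (p.2.factorial : ℂ) * ((p.1 - p.2).factorial : ℂ)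
        = (p.1.factorial : ℂ) := by
      exact_mod_cast congrArg (Nat.cast (R := ℂ))
        (Nat.choose_mul_factorial_mul_factorial hp3)
    have hpow : t ^ p.1 = t ^ p.2 * t ^ (p.1 - p.2) := by
      rw [← pow_add]
      congr 1
      omega
    have f1 := fact_ne p.1
    have f2 := fact_ne p.2
    have f3 := fact_ne (p.1 - p.2)
    rw [hpow]
    field_simp [f1, f2, f3]
    linear_combination (t ^ p.2 * t ^ (p.1 - p.2)) * hch

lemma sum_reindex2 (k : ℕ) (t s : ℂ) (M : ℕ → V) (hM : ∀ m, k < m → M m = 0) :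
    ∑ j ∈ Finset.range (k+1), ∑ i ∈ Finset.range (k+1),
        ((t ^ j * ((j.factorial : ℂ))⁻¹) * (s ^ i * ((i.factorial : ℂ))⁻¹)) • M (j + i)
      = ∑ m ∈ Finset.range (k+1), ((t + s) ^ m * ((m.factorial : ℂ))⁻¹) • M m := by
  have rhs1 : ∀ m ∈ Finset.range (k+1),
      ((t + s) ^ m * ((m.factorial : ℂ))⁻¹) • M m
        = ∑ i ∈ Finset.range (k+1),
            ((t ^ i * s ^ (m - i) * (m.choose i : ℂ)) * ((m.factorial : ℂ))⁻¹) • M m := by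
    intro m hm
    have hext : ∑ i ∈ Finset.range (m+1),
        ((t ^ i * s ^ (m - i) * (m.choose i : ℂ)) * ((m.factorial : ℂ))⁻¹) • M m
        = ∑ i ∈ Finset.range (k+1),
            ((t ^ i * s ^ (m - i) * (m.choose i : ℂ)) * ((m.factorial : ℂ))⁻¹) • M m := by
      apply Finset.sum_subset
      · apply Finset.range_subset_range.mpr
        exact Nat.succ_le_succ (Nat.lt_succ_iff.mp (Finset.mem_range.mp hm))
      · intro i _ hni
        have : m < i := by simp only [Finset.mem_range] at hni; omega
        rw [Nat.choose_eq_zero_of_lt this]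
        simp
    rw [← hext, ← Finset.sum_smul, ← Finset.sum_mul]
    congr 2
    rw [add_pow]
  rw [Finset.sum_congr rfl rhs1]
  rw [← Finset.sum_product', ← Finset.sum_product']
  rw [← Finset.sum_filter_of_ne (s := Finset.range (k+1) ×ˢ Finset.range (k+1))
      (p := fun p => p.1 + p.2 ≤ k)
      (f := fun p => ((t ^ p.1 * ((p.1.factorial : ℂ))⁻¹) * (s ^ p.2 * ((p.2.factorial : ℂ))⁻¹)) • M (p.1 + p.2))
      (by
        intro p _ hne
        by_contra hp
        apply hne
        rw [hM (p.1 + p.2) (by omega)]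
        simp)]
  rw [← Finset.sum_filter_of_ne (s := Finset.range (k+1) ×ˢ Finset.range (k+1))
      (p := fun p => p.2 ≤ p.1)
      (f := fun p => ((t ^ p.2 * s ^ (p.1 - p.2) * (p.1.choose p.2 : ℂ)) * ((p.1.factorial : ℂ))⁻¹) • M p.1)
      (by
        intro p _ hne
        by_contra hp
        apply hne
        rw [Nat.choose_eq_zero_of_lt (by omega)]
        simp)]
  apply Finset.sum_nbij' (i := fun p => (p.1 + p.2, p.1)) (j := fun q => (q.2, q.1 - q.2))
  · intro p hp
    simp only [Finset.mem_filter, Finset.mem_product, Finset.mem_range] at hp ⊢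
    omega
  · intro q hq
    simp only [Finset.mem_filter, Finset.mem_product, Finset.mem_range] at hq ⊢
    omega
  · intro p hp
    simp only [Finset.mem_filter, Finset.mem_product, Finset.mem_range] at hp
    refine Prod.ext ?_ ?_ <;> simp <;> omega
  · intro q hq
    simp only [Finset.mem_filter, Finset.mem_product, Finset.mem_range] at hq
    refine Prod.ext ?_ ?_ <;> simp <;> omega
  · intro p hp
    simp only [Finset.mem_filter, Finset.mem_product, Finset.mem_range] at hp
    obtain ⟨⟨hp1, hp2⟩, hp3⟩ := hp
    have e1 : p.1 + p.2 - p.1 = p.2 := by omega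
    simp only [e1]
    congr 1
    have hch : (((p.1 + p.2).choose p.1 : ℕ) : ℂ) * (p.1.factorial : ℂ) * (p.2.factorial : ℂ)
        = ((p.1 + p.2).factorial : ℂ) := by
      have := Nat.choose_mul_factorial_mul_factorial (Nat.le_add_right p.1 p.2)
      rw [Nat.add_sub_cancel_left] at this
      exact_mod_cast congrArg (Nat.cast (R := ℂ)) this
    have f1 := fact_ne p.1
    have f2 := fact_ne p.2
    have f3 := fact_ne (p.1 + p.2)
    field_simp [f1, f2, f3]
    linear_combination (-(t ^ p.1 * s ^ p.2)) * hch

end combin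
section Exlem
variable {V : Type*} [AddCommGroup V] [Module ℂ V]
variable (Di : ℕ → V → V) (hDlin : ∀ i, IsLinearMap ℂ (Di i))
set_option linter.unusedSectionVars false
include hDlin

lemma Ex_apply (t : ℂ) (a : FS V) (k : ℕ) :
    Ex Di t a k = ∑ j ∈ Finset.range (k + 1),
      (t ^ j * ((j.factorial : ℂ))⁻¹) • (Nop Di)^[j] a k := rfl

lemma Ex_trunc (t : ℂ) (a : FS V) (K j : ℕ) (hj : j ≤ K) :
    Ex Di t a j = ∑ i ∈ Finset.range (K + 1),
      (t ^ i * ((i.factorial : ℂ))⁻¹) • (Nop Di)^[i] a j := by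
  rw [Ex_apply Di hDlin]
  apply Finset.sum_subset
  · exact Finset.range_subset_range.mpr (by omega)
  · intro i hi hni
    simp only [Finset.mem_range] at hni
    rw [Npow_vanish Di hDlin i j (by omega), smul_zero]

lemma Ex_eq_truncfun (t : ℂ) (a : FS V) (K j : ℕ) (hj : j ≤ K) :
    Ex Di t a j
      = (∑ i ∈ Finset.range (K + 1), (t ^ i * ((i.factorial : ℂ))⁻¹) • (Nop Di)^[i] a) j := by
  rw [Ex_trunc Di hDlin t a K j hj]
  simp [Finset.sum_apply]

lemma Ex_Ex (t s : ℂ) (a : FS V) : Ex Di t (Ex Di s a) = Ex Di (t + s) a := by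
  funext k
  have hN : ∀ j, (Nop Di)^[j] (Ex Di s a) k
      = ∑ i ∈ Finset.range (k + 1),
          (s ^ i * ((i.factorial : ℂ))⁻¹) • (Nop Di)^[j + i] a k := by
    intro j
    have h1 : (Nop Di)^[j] (Ex Di s a) k
        = (Nop Di)^[j] (∑ i ∈ Finset.range (k + 1),
            (s ^ i * ((i.factorial : ℂ))⁻¹) • (Nop Di)^[i] a) k := by
      apply Npow_congr Di hDlin j _ _ k _ k le_rfl
      intro j' hj'
      exact Ex_eq_truncfun Di hDlin s a k j' hj'
    rw [h1]
    have h2 : (Nop Di)^[j] (∑ i ∈ Finset.range (k + 1),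
        (s ^ i * ((i.factorial : ℂ))⁻¹) • (Nop Di)^[i] a)
        = ∑ i ∈ Finset.range (k + 1),
            (s ^ i * ((i.factorial : ℂ))⁻¹) • (Nop Di)^[j + i] a := by
      have hsum : ∀ (sfin : Finset ℕ) (f : ℕ → FS V),
          (Nop Di)^[j] (∑ i ∈ sfin, f i) = ∑ i ∈ sfin, (Nop Di)^[j] (f i) :=
        fun sfin f => map_sum (AddMonoidHom.mk' ((Nop Di)^[j]) (Npow_add Di hDlin j)) f sfin
      rw [hsum]
      apply Finset.sum_congr rfl
      intro i _
      show (Nop Di)^[j] (_ • _) = _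
      rw [Npow_smul Di hDlin j, Function.iterate_add_apply]
    rw [h2]
    simp [Finset.sum_apply]
  rw [Ex_apply Di hDlin]
  have : ∀ j ∈ Finset.range (k + 1),
      (t ^ j * ((j.factorial : ℂ))⁻¹) • (Nop Di)^[j] (Ex Di s a) k
      = ∑ i ∈ Finset.range (k + 1),
          ((t ^ j * ((j.factorial : ℂ))⁻¹) * (s ^ i * ((i.factorial : ℂ))⁻¹)) •
            (Nop Di)^[j + i] a k := by
    intro j _
    rw [hN j, Finset.smul_sum]
    apply Finset.sum_congr rfl
    intro i _
    rw [smul_smul]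
  rw [Finset.sum_congr rfl this]
  rw [sum_reindex2 k t s (fun m => (Nop Di)^[m] a k)
    (fun m hm => Npow_vanish Di hDlin m k hm a)]
  rfl
end Exlem

section Exm1
variable {V : Type*} [AddCommGroup V] [Module ℂ V]
variable (Di : ℕ → V → V) (hDlin : ∀ i, IsLinearMap ℂ (Di i))
variable (m1 : FS V → FS V → FS V)
variable (hm1lin : ∀ b, IsLinearMap ℂ (fun a => m1 a b) ∧ IsLinearMap ℂ (fun a => m1 b a))
variable (hm1fil : ∀ (a b a' b' : FS V) (k : ℕ),
      (∀ j ≤ k, a j = a' j ∧ b j = b' j) → m1 a b k = m1 a' b' k)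
variable (hm1shift : ∀ (a b : FS V) (k : ℕ),
      m1 (fun j => if j = 0 then 0 else a (j - 1)) b k
          = (if k = 0 then 0 else m1 a b (k - 1)) ∧
      m1 a (fun j => if j = 0 then 0 else b (j - 1)) k
          = (if k = 0 then 0 else m1 a b (k - 1)))
variable (hDder : ∀ a b, Dop Di (m1 a b) = m1 (Dop Di a) b + m1 a (Dop Di b))
set_option linter.unusedSectionVars false
include hDlin hm1lin hm1fil hm1shift hDder

lemma Ex_m1 (t : ℂ) (a b : FS V) :
    Ex Di t (m1 a b) = m1 (Ex Di t a) (Ex Di t b) := by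
  funext k
  set c : ℕ → ℂ := fun j => t ^ j * ((j.factorial : ℂ))⁻¹ with hc
  -- RHS expansion
  have hR : m1 (Ex Di t a) (Ex Di t b) k
      = ∑ i ∈ Finset.range (k + 1), ∑ l ∈ Finset.range (k + 1),
          (c i * c l) • m1 ((Nop Di)^[i] a) ((Nop Di)^[l] b) k := by
    have h1 : m1 (Ex Di t a) (Ex Di t b) k
        = m1 (∑ i ∈ Finset.range (k + 1), c i • (Nop Di)^[i] a)
             (∑ l ∈ Finset.range (k + 1), c l • (Nop Di)^[l] b) k := by
      apply hm1fil
      intro j hj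
      exact ⟨Ex_eq_truncfun Di hDlin t a k j hj, Ex_eq_truncfun Di hDlin t b k j hj⟩
    rw [h1]
    have hL : ∀ z : FS V, m1 (∑ i ∈ Finset.range (k + 1), c i • (Nop Di)^[i] a) z
        = ∑ i ∈ Finset.range (k + 1), c i • m1 ((Nop Di)^[i] a) z := by
      intro z
      let L : FS V →ₗ[ℂ] FS V := IsLinearMap.mk' _ (hm1lin z).1
      have hLe : ∀ x, m1 x z = L x := fun x => rfl
      rw [hLe, map_sum]
      apply Finset.sum_congr rfl
      intro i _
      rw [map_smul]
      rfl
    have hRf : ∀ x : FS V, m1 x (∑ l ∈ Finset.range (k + 1), c l • (Nop Di)^[l] b)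
        = ∑ l ∈ Finset.range (k + 1), c l • m1 x ((Nop Di)^[l] b) := by
      intro x
      let R : FS V →ₗ[ℂ] FS V := IsLinearMap.mk' _ (hm1lin x).2
      have hRe : ∀ y, m1 x y = R y := fun y => rfl
      rw [hRe, map_sum]
      apply Finset.sum_congr rfl
      intro l _
      rw [map_smul]
      rfl
    rw [hL]
    have : ∀ i ∈ Finset.range (k + 1),
        c i • m1 ((Nop Di)^[i] a) (∑ l ∈ Finset.range (k + 1), c l • (Nop Di)^[l] b)
        = ∑ l ∈ Finset.range (k + 1), (c i * c l) • m1 ((Nop Di)^[i] a) ((Nop Di)^[l] b) := by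
      intro i _
      rw [hRf, Finset.smul_sum]
      apply Finset.sum_congr rfl
      intro l _
      rw [smul_smul]
    rw [Finset.sum_congr rfl this]
    simp [Finset.sum_apply]
  -- LHS expansion
  have hLhs : Ex Di t (m1 a b) k
      = ∑ j ∈ Finset.range (k + 1), ∑ i ∈ Finset.range (j + 1),
          (c j * (j.choose i : ℂ)) • m1 ((Nop Di)^[i] a) ((Nop Di)^[j - i] b) k := by
    rw [Ex_apply Di hDlin]
    apply Finset.sum_congr rfl
    intro j _
    rw [Npow_m1 Di hDlin m1 hm1lin hm1shift hDder a b j]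
    rw [Finset.sum_apply, Finset.smul_sum]
    apply Finset.sum_congr rfl
    intro i _
    rw [Pi.smul_apply]
    rw [← Nat.cast_smul_eq_nsmul ℂ (j.choose i), smul_smul]
  rw [hLhs, hR]
  exact sum_reindex k t (fun i l => m1 ((Nop Di)^[i] a) ((Nop Di)^[l] b) k)
    (fun i l h => m1_Npow_vanish Di hDlin m1 hm1shift i l a b k h)
end Exm1
section Conj
variable {V : Type*} [AddCommGroup V] [Module ℂ V]
variable (c0 : V → V) (Di : ℕ → V → V)
variable (hDlin : ∀ i, IsLinearMap ℂ (Di i))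
variable (hc0invol : ∀ v, c0 (c0 v) = v)
variable (hc0add : ∀ u v, c0 (u + v) = c0 u + c0 v)
variable (hc0conj : ∀ (z : ℂ) (v : V), c0 (z • v) = (starRingEnd ℂ z) • c0 v)
set_option linter.unusedSectionVars false

include hc0conj in
lemma c0_zero : c0 0 = 0 := by
  have := hc0conj 0 0
  simpa using this

include hc0conj in
lemma c0_zsmul (n : ℤ) (v : V) : c0 (n • v) = n • c0 v := by
  rw [← Int.cast_smul_eq_zsmul ℂ, hc0conj, map_intCast, Int.cast_smul_eq_zsmul]

include hc0invol hc0conj in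
lemma Cop_invol (a : FS V) : Cop c0 (Cop c0 a) = a := by
  funext k
  show ((-1 : ℤ) ^ k) • c0 (((-1 : ℤ) ^ k) • c0 (a k)) = a k
  rw [c0_zsmul c0 hc0conj, hc0invol, smul_smul, ← mul_pow]
  norm_num

include hc0conj in
lemma Cop_Nop (hCDC : ∀ a, Cop c0 (Dop Di (Cop c0 a)) = Dop Di a) (a : FS V) :
    Cop c0 (Nop Di (Cop c0 a)) = -(Nop Di a) := by
  funext k
  show ((-1 : ℤ) ^ k) • c0 (Nop Di (Cop c0 a) k) = -(Nop Di a k)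
  cases k with
  | zero => simp [Nop, c0_zero c0 hc0conj]
  | succ s =>
    have h : ((-1 : ℤ) ^ s) • c0 (Dop Di (Cop c0 a) s) = Dop Di a s :=
      congrFun (hCDC a) s
    show ((-1 : ℤ) ^ (s + 1)) • c0 (Dop Di (Cop c0 a) s) = -(Dop Di a s)
    rw [← h, pow_succ, mul_comm, mul_smul]
    simp

include hDlin hc0invol hc0conj in
lemma Cop_Npow (hCDC : ∀ a, Cop c0 (Dop Di (Cop c0 a)) = Dop Di a) (n : ℕ) (a : FS V) :
    Cop c0 ((Nop Di)^[n] (Cop c0 a)) = ((-1 : ℂ) ^ n) • (Nop Di)^[n] a := by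
  induction n with
  | zero => simp [Cop_invol c0 hc0invol hc0conj]
  | succ n ih =>
    rw [Function.iterate_succ_apply']
    have h1 : (Nop Di)^[n] (Cop c0 a) = Cop c0 (((-1 : ℂ) ^ n) • (Nop Di)^[n] a) := by
      rw [← ih, Cop_invol c0 hc0invol hc0conj]
    rw [h1, Cop_Nop c0 Di hc0conj hCDC, Nop_smul Di hDlin,
      ← Function.iterate_succ_apply' (Nop Di) n a]
    rw [pow_succ, mul_comm, mul_smul]
    simp

include hDlin hc0invol hc0add hc0conj in
lemma Cop_Ex (hCDC : ∀ a, Cop c0 (Dop Di (Cop c0 a)) = Dop Di a)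
    (t : ℂ) (ht : (starRingEnd ℂ) t = t) (a : FS V) :
    Cop c0 (Ex Di t (Cop c0 a)) = Ex Di (-t) a := by
  funext k
  show ((-1 : ℤ) ^ k) • c0 (Ex Di t (Cop c0 a) k) = Ex Di (-t) a k
  rw [Ex_apply Di hDlin]
  have hsum : ∀ (sfin : Finset ℕ) (f : ℕ → V), c0 (∑ i ∈ sfin, f i) = ∑ i ∈ sfin, c0 (f i) :=
    fun sfin f => map_sum (AddMonoidHom.mk' c0 hc0add) f sfin
  rw [hsum, Finset.smul_sum, Ex_apply Di hDlin]
  apply Finset.sum_congr rfl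
  intro j _
  rw [hc0conj]
  have hterm : ((-1 : ℤ) ^ k) • ((starRingEnd ℂ) (t ^ j * ((j.factorial : ℂ))⁻¹)) •
      c0 ((Nop Di)^[j] (Cop c0 a) k)
      = ((starRingEnd ℂ) (t ^ j * ((j.factorial : ℂ))⁻¹)) •
          (Cop c0 ((Nop Di)^[j] (Cop c0 a)) k) := by
    rw [smul_comm]
    rfl
  rw [hterm, Cop_Npow c0 Di hDlin hc0invol hc0conj hCDC j a]
  rw [Pi.smul_apply, smul_smul]
  congr 1
  rw [map_mul, map_pow, ht, map_inv₀, map_natCast]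
  rw [neg_pow]
  ring
end Conj

/-- Let `⋆₁`, `⋆₂` be star products with `*`-structure `C`
(`C` an involutive anti-automorphism of both), let `T` be an equivalence
transformation from `⋆₁` to `⋆₂`, and suppose `C T C = T exp(νD)` for a
derivation `D` of `⋆₁` with `C D C = D`.  Then `S = T exp((ν/2) D)` is an
equivalence transformation from `⋆₁` to `⋆₂` satisfying `C S C = S`. -/
theorem equivalence_compatible_with_conjugation
    (m1 m2 : FS V → FS V → FS V) (T : FS V → FS V)
    (c0 : V → V) (Di : ℕ → V → V)
    (hc0invol : ∀ v, c0 (c0 v) = v)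
    (hc0add : ∀ u v, c0 (u + v) = c0 u + c0 v)
    (hc0conj : ∀ (z : ℂ) (v : V), c0 (z • v) = (starRingEnd ℂ z) • c0 v)
    (hDlin : ∀ i, IsLinearMap ℂ (Di i))
    (hm1lin : ∀ b, IsLinearMap ℂ (fun a => m1 a b) ∧ IsLinearMap ℂ (fun a => m1 b a))
    (hm1fil : ∀ (a b a' b' : FS V) (k : ℕ),
      (∀ j ≤ k, a j = a' j ∧ b j = b' j) → m1 a b k = m1 a' b' k)
    (hm1shift : ∀ (a b : FS V) (k : ℕ),
      m1 (fun j => if j = 0 then 0 else a (j - 1)) b k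
          = (if k = 0 then 0 else m1 a b (k - 1)) ∧
      m1 a (fun j => if j = 0 then 0 else b (j - 1)) k
          = (if k = 0 then 0 else m1 a b (k - 1)))
    (hC1 : ∀ a b, Cop c0 (m1 a b) = m1 (Cop c0 b) (Cop c0 a))
    (hC2 : ∀ a b, Cop c0 (m2 a b) = m2 (Cop c0 b) (Cop c0 a))
    (hT : ∀ a b, T (m1 a b) = m2 (T a) (T b))
    (hDder : ∀ a b, Dop Di (m1 a b) = m1 (Dop Di a) b + m1 a (Dop Di b))
    (hCDC : ∀ a, Cop c0 (Dop Di (Cop c0 a)) = Dop Di a)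
    (hCTC : ∀ a, Cop c0 (T (Cop c0 a)) = T (Ex Di 1 a)) :
    (∀ a b, T (Ex Di (1 / 2) (m1 a b))
        = m2 (T (Ex Di (1 / 2) a)) (T (Ex Di (1 / 2) b)))
    ∧ (∀ a, Cop c0 (T (Ex Di (1 / 2) (Cop c0 a))) = T (Ex Di (1 / 2) a)) := by
  constructor
  · intro a b
    rw [Ex_m1 Di hDlin m1 hm1lin hm1fil hm1shift hDder (1 / 2) a b, hT]
  · intro a
    have h1 : Cop c0 (Ex Di (1 / 2) (Cop c0 a)) = Ex Di (-(1 / 2)) a :=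
      Cop_Ex c0 Di hDlin hc0invol hc0add hc0conj hCDC (1 / 2) (by rw [map_div₀, map_one, map_ofNat]) a
    have h2 : Ex Di (1 / 2 : ℂ) (Cop c0 a) = Cop c0 (Ex Di (-(1 / 2)) a) := by
      rw [← h1, Cop_invol c0 hc0invol hc0conj]
    rw [h2, hCTC (Ex Di (-(1 / 2)) a), Ex_Ex Di hDlin]
    have e : (1 : ℂ) + -(1 / 2) = 1 / 2 := by norm_num
    rw [e]
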